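/- Let n ≥ 2, R ≥ 2 and 1 ≤ c ≤ R − 1 be integers, and let n_{c+1}, …, n_R ≥ 1 be integers with Σ_{j=c+1}^R n_j = n which are not all equal. Then b_min < 1, where b_min = max(0, ln(n̄̄/(R−1))/ln n, ln(n̲̲)/ln n, ln(n̄ − n̲)/ln n). -/

import Mathlib

open Finset

lemma log_div_log_lt_one_of_abs_lt {n : ℕ} (hn : 2 ≤ n) {x : ℝ} (hx : |x| < n) :
    Real.log x / Real.log n < 1 := by
  have hn1 : (1 : ℝ) < n := by exact_mod_cast hn.trans_lt' one_lt_two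
  have hlogn : 0 < Real.log n := Real.log_pos hn1
  rw [div_lt_one hlogn, ← Real.log_abs]
  rcases eq_or_lt_of_le (abs_nonneg x) with h | h
  · rw [← h, Real.log_zero]; exact hlogn
  · exact Real.log_lt_log h hx

/-- First assertion of Property 1 of the paper: if the nonzero cell
frequencies `n_{c+1}, …, n_R` (summing to `n`) are not all equal, then
`b_min < 1`, where
`b_min = max (0, ln(n̄̄/(R−1))/ln n, ln(n̲̲)/ln n, ln(n̄ − n̲)/ln n)`,
with `n̲` the minimum and `n̄` the maximum of the `n_j`,
`n̲̲ = n − n̲(R−c)` and `n̄̄ = n̄(R−c) − n`. -/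
theorem bmin_lt_one
    (n R c : ℕ) (hn : 2 ≤ n) (hR : 2 ≤ R) (hc1 : 1 ≤ c) (hcR : c ≤ R - 1)
    (nj : ℕ → ℕ) (hnj : ∀ j ∈ Finset.Icc (c + 1) R, 1 ≤ nj j)
    (hnsum : ∑ j ∈ Finset.Icc (c + 1) R, nj j = n)
    (hne : ∃ j ∈ Finset.Icc (c + 1) R, ∃ j' ∈ Finset.Icc (c + 1) R, nj j ≠ nj j')
    (nmin nmax : ℕ)
    (hminle : ∀ j ∈ Finset.Icc (c + 1) R, nmin ≤ nj j)
    (hminmem : ∃ j ∈ Finset.Icc (c + 1) R, nj j = nmin)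
    (hmaxle : ∀ j ∈ Finset.Icc (c + 1) R, nj j ≤ nmax)
    (hmaxmem : ∃ j ∈ Finset.Icc (c + 1) R, nj j = nmax) :
    max 0 (max
        (Real.log (((nmax : ℝ) * ((R : ℝ) - (c : ℝ)) - (n : ℝ)) / ((R : ℝ) - 1)) /
          Real.log n)
        (max
          (Real.log ((n : ℝ) - (nmin : ℝ) * ((R : ℝ) - (c : ℝ))) / Real.log n)
          (Real.log ((nmax : ℝ) - (nmin : ℝ)) / Real.log n))) < 1 := by
  have hcR' : c + 1 ≤ R := by omega
  -- cardinality of the index set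
  have hcard : (Finset.Icc (c + 1) R).card = R - c := by
    rw [Nat.card_Icc]; omega
  -- nmax ≤ n
  obtain ⟨j, hj, hjmax⟩ := hmaxmem
  have hmaxn : nmax ≤ n := by
    rw [← hjmax, ← hnsum]
    exact Finset.single_le_sum (fun i _ => Nat.zero_le _) hj
  -- 1 ≤ nmin
  obtain ⟨j', hj', hjmin⟩ := hminmem
  have hmin1 : 1 ≤ nmin := hjmin ▸ hnj j' hj'
  -- nmin * (R - c) ≤ n
  have hminsum : nmin * (R - c) ≤ n := by
    calc nmin * (R - c) = ∑ _j ∈ Finset.Icc (c + 1) R, nmin := by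
          rw [Finset.sum_const, hcard, smul_eq_mul, Nat.mul_comm]
      _ ≤ ∑ j ∈ Finset.Icc (c + 1) R, nj j := Finset.sum_le_sum hminle
      _ = n := hnsum
  have hminsum' : (nmin : ℝ) * ((R : ℝ) - (c : ℝ)) ≤ n := by
    have : ((nmin * (R - c) : ℕ) : ℝ) ≤ (n : ℝ) := by exact_mod_cast hminsum
    rw [Nat.cast_mul, Nat.cast_sub (by omega)] at this
    exact_mod_cast this
  have hRc1 : (1 : ℝ) ≤ (R : ℝ) - (c : ℝ) := by
    have : (c : ℝ) + 1 ≤ R := by exact_mod_cast hcR'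
    linarith
  have hR1 : (1 : ℝ) ≤ (R : ℝ) - 1 := by
    have : (2 : ℝ) ≤ R := by exact_mod_cast hR
    linarith
  have hRcR1 : (R : ℝ) - (c : ℝ) ≤ (R : ℝ) - 1 := by
    have : (1 : ℝ) ≤ c := by exact_mod_cast hc1
    linarith
  have hmaxn' : (nmax : ℝ) ≤ n := by exact_mod_cast hmaxn
  have hmin1' : (1 : ℝ) ≤ nmin := by exact_mod_cast hmin1
  have hmax1 : 1 ≤ nmax := hmin1.trans (hjmax ▸ hminle j hj)
  have hmax1' : (1 : ℝ) ≤ nmax := by exact_mod_cast hmax1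
  have hn0 : (0 : ℝ) < n := by positivity
  -- bound each of the three ratio terms
  have h1 : |((nmax : ℝ) * ((R : ℝ) - (c : ℝ)) - (n : ℝ)) / ((R : ℝ) - 1)| < n := by
    rw [abs_div, abs_of_nonneg (by linarith : (0:ℝ) ≤ (R:ℝ) - 1),
      div_lt_iff₀ (by linarith : (0:ℝ) < (R:ℝ) - 1), abs_lt]
    constructor
    · nlinarith
    · nlinarith
  have h2 : |(n : ℝ) - (nmin : ℝ) * ((R : ℝ) - (c : ℝ))| < n := by
    rw [abs_lt]
    constructor
    · linarith
    · nlinarith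
  have h3 : |(nmax : ℝ) - (nmin : ℝ)| < n := by
    rw [abs_lt]
    constructor
    · nlinarith
    · linarith
  have := log_div_log_lt_one_of_abs_lt hn h1
  have := log_div_log_lt_one_of_abs_lt hn h2
  have := log_div_log_lt_one_of_abs_lt hn h3
  simp only [max_lt_iff]
  exact ⟨one_pos, by assumption, by assumption, by assumption⟩
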